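/- Let L ≥ 1 and let R be an L×L Hermitian positive definite complex matrix with positive square root R^{1/2}. Then for every L×L complex matrix A there exists a unique L×L complex matrix X satisfying R X R^{1/2} + R^{1/2} X R = A; write X = D_R(A). Moreover, for all L×L matrices A and B one has Tr( D_R(A) · B ) = Tr( A · D_R(B) ). -/

import Mathlib

open Matrix
open scoped ComplexOrder

noncomputable def Matrix.PosSemidef.sqrt {n : Type*} [Fintype n] [DecidableEq n] {𝕜 : Type*}
    [RCLike 𝕜] {A : Matrix n n 𝕜} (hA : A.PosSemidef) : Matrix n n 𝕜 :=
  hA.1.eigenvectorUnitary.1 * diagonal ((↑) ∘ (√·) ∘ hA.1.eigenvalues) *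
    (star hA.1.eigenvectorUnitary : Matrix n n 𝕜)

lemma Matrix.PosSemidef.posSemidef_sqrt {n : Type*} [Fintype n] [DecidableEq n] {𝕜 : Type*}
    [RCLike 𝕜] {A : Matrix n n 𝕜} (hA : A.PosSemidef) : hA.sqrt.PosSemidef := by
  unfold Matrix.PosSemidef.sqrt
  have hD : (diagonal ((↑) ∘ (√·) ∘ hA.1.eigenvalues) : Matrix n n 𝕜).PosSemidef := by
    rw [posSemidef_diagonal_iff]
    intro i
    simp only [Function.comp_apply, RCLike.ofReal_nonneg]
    exact Real.sqrt_nonneg _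
  simpa [Matrix.star_eq_conjTranspose] using hD.mul_mul_conjTranspose_same
    (hA.1.eigenvectorUnitary : Matrix n n 𝕜)

lemma Matrix.PosSemidef.sqrt_mul_self {n : Type*} [Fintype n] [DecidableEq n] {𝕜 : Type*}
    [RCLike 𝕜] {A : Matrix n n 𝕜} (hA : A.PosSemidef) : hA.sqrt * hA.sqrt = A := by
  unfold Matrix.PosSemidef.sqrt
  conv_rhs => rw [hA.1.spectral_theorem]
  rw [Unitary.conjStarAlgAut_apply]
  have hU : (star hA.1.eigenvectorUnitary : Matrix n n 𝕜) * hA.1.eigenvectorUnitary.1 = 1 :=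
    Unitary.coe_star_mul_self _
  calc _ = hA.1.eigenvectorUnitary.1 * diagonal ((↑) ∘ (√·) ∘ hA.1.eigenvalues) *
      ((star hA.1.eigenvectorUnitary : Matrix n n 𝕜) * hA.1.eigenvectorUnitary.1) *
      diagonal ((↑) ∘ (√·) ∘ hA.1.eigenvalues) *
      (star hA.1.eigenvectorUnitary : Matrix n n 𝕜) := by simp only [Matrix.mul_assoc]
    _ = _ := by
      rw [hU, Matrix.mul_one, Matrix.mul_assoc (hA.1.eigenvectorUnitary.1 : Matrix n n 𝕜) (diagonal _), diagonal_mul_diagonal]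
      congr 3
      funext i
      simp only [Function.comp_apply]
      rw [← RCLike.ofReal_mul, Real.mul_self_sqrt (hA.eigenvalues_nonneg i)]

private lemma trace_conjTranspose_mul_self_repr {L : ℕ} (M : Matrix (Fin L) (Fin L) ℂ) :
    (Mᴴ * M).trace = ((∑ j, ∑ i, Complex.normSq (M i j) : ℝ) : ℂ) := by
  simp only [Matrix.trace, Matrix.diag, Matrix.mul_apply, Matrix.conjTranspose_apply]
  push_cast
  refine Finset.sum_congr rfl fun j _ => Finset.sum_congr rfl fun i _ => ?_
  rw [Complex.star_def, ← Complex.normSq_eq_conj_mul_self]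

private lemma eq_zero_of_trace_sum {L : ℕ} (M N : Matrix (Fin L) (Fin L) ℂ)
    (h : (Mᴴ * M).trace + (Nᴴ * N).trace = 0) : M = 0 := by
  rw [trace_conjTranspose_mul_self_repr, trace_conjTranspose_mul_self_repr] at h
  rw [← Complex.ofReal_add] at h
  have h' : (∑ j, ∑ i, Complex.normSq (M i j)) + ∑ j, ∑ i, Complex.normSq (N i j) = 0 := by
    exact_mod_cast h
  have hM : (∑ j, ∑ i, Complex.normSq (M i j)) = 0 := by
    have h1 : 0 ≤ ∑ j, ∑ i, Complex.normSq (M i j) :=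
      Finset.sum_nonneg fun j _ => Finset.sum_nonneg fun i _ => Complex.normSq_nonneg _
    have h2 : 0 ≤ ∑ j, ∑ i, Complex.normSq (N i j) :=
      Finset.sum_nonneg fun j _ => Finset.sum_nonneg fun i _ => Complex.normSq_nonneg _
    linarith
  ext i j
  have := (Finset.sum_eq_zero_iff_of_nonneg
    (fun j _ => Finset.sum_nonneg fun i _ => Complex.normSq_nonneg (M i j))).mp hM
    j (Finset.mem_univ j)
  have := (Finset.sum_eq_zero_iff_of_nonneg
    (fun i _ => Complex.normSq_nonneg (M i j))).mp this i (Finset.mem_univ i)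
  simpa using Complex.normSq_eq_zero.mp this

/-- existence, uniqueness, and trace-symmetry for the operator
`D_R`, i.e. the unique solution `X` of `R X R^{1/2} + R^{1/2} X R = A`. -/
theorem sylvester_sqrt_existsUnique_and_trace_symm
    (L : ℕ) (hL : 1 ≤ L) (R : Matrix (Fin L) (Fin L) ℂ) (hR : R.PosDef) :
    (∀ A : Matrix (Fin L) (Fin L) ℂ,
        ∃! X : Matrix (Fin L) (Fin L) ℂ,
          R * X * hR.posSemidef.sqrt + hR.posSemidef.sqrt * X * R = A) ∧
      ∀ A B X Y : Matrix (Fin L) (Fin L) ℂ,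
        R * X * hR.posSemidef.sqrt + hR.posSemidef.sqrt * X * R = A →
        R * Y * hR.posSemidef.sqrt + hR.posSemidef.sqrt * Y * R = B →
        (X * B).trace = (A * Y).trace := by
  set S := hR.posSemidef.sqrt with hSdef
  have hS : S.PosSemidef := hR.posSemidef.posSemidef_sqrt
  have hSS : S * S = R := hR.posSemidef.sqrt_mul_self
  clear_value S
  set Q := hS.sqrt with hQdef
  have hQ : Q.PosSemidef := hS.posSemidef_sqrt
  have hQQ : Q * Q = S := hS.sqrt_mul_self
  clear_value Q
  -- invertibility of S and Q
  have hRdet : IsUnit R.det := hR.isUnit.map (Matrix.detMonoidHom)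
  have hSdet : IsUnit S.det := by
    have : S.det * S.det = R.det := by rw [← Matrix.det_mul, hSS]
    exact isUnit_of_mul_isUnit_left (this ▸ hRdet)
  have hQdet : IsUnit Q.det := by
    have : Q.det * Q.det = S.det := by rw [← Matrix.det_mul, hQQ]
    exact isUnit_of_mul_isUnit_left (this ▸ hSdet)
  -- injectivity of the linear map X ↦ R X S + S X R
  have key : ∀ X : Matrix (Fin L) (Fin L) ℂ,
      R * X * S + S * X * R = 0 → X = 0 := by
    intro X hX
    set Y := S * X * S with hYdef
    clear_value Y
    have hY : S * Y + Y * S = 0 := by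
      have : S * Y + Y * S = R * X * S + S * X * R := by
        rw [hYdef, ← hSS]; noncomm_ring
      rw [this, hX]
    -- trace argument
    have hQherm : Qᴴ = Q := hQ.1
    have e1 : Yᴴ * (S * Y) = (Q * Y)ᴴ * (Q * Y) := by
      rw [Matrix.conjTranspose_mul, hQherm, ← hQQ]; noncomm_ring
    have e2 : (Yᴴ * (Y * S)).trace = ((Y * Q)ᴴ * (Y * Q)).trace := by
      rw [Matrix.conjTranspose_mul, hQherm, ← hQQ,
        show Yᴴ * (Y * (Q * Q)) = (Yᴴ * Y * Q) * Q by noncomm_ring,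
        Matrix.trace_mul_comm]
      congr 1; noncomm_ring
    have hsum : ((Q * Y)ᴴ * (Q * Y)).trace + ((Y * Q)ᴴ * (Y * Q)).trace = 0 := by
      rw [← e1, ← e2, ← Matrix.trace_add, ← Matrix.mul_add, hY, Matrix.mul_zero,
        Matrix.trace_zero]
    have hQY : Q * Y = 0 := eq_zero_of_trace_sum _ _ hsum
    have hYzero : Y = 0 := by
      have := congrArg (fun M => Q⁻¹ * M) hQY
      simpa [← Matrix.mul_assoc, Matrix.nonsing_inv_mul Q hQdet] using this
    -- Y = S X S = 0 ⇒ X = 0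
    have h1 : S * X * S = 0 := hYdef ▸ hYzero
    have h2 : X * S = 0 := by
      have := congrArg (fun M => S⁻¹ * M) h1
      simpa [← Matrix.mul_assoc, Matrix.nonsing_inv_mul S hSdet] using this
    have := congrArg (fun M => M * S⁻¹) h2
    simpa [Matrix.mul_assoc, Matrix.mul_nonsing_inv S hSdet] using this
  constructor
  · -- existence and uniqueness
    intro A
    let f : Matrix (Fin L) (Fin L) ℂ →ₗ[ℂ] Matrix (Fin L) (Fin L) ℂ :=
      { toFun := fun X => R * X * S + S * X * R
        map_add' := fun x y => by
          simp only [Matrix.mul_add, Matrix.add_mul]; abel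
        map_smul' := fun c x => by
          simp [Matrix.mul_smul, Matrix.smul_mul, smul_add] }
    have hinj : Function.Injective f := by
      rw [← LinearMap.ker_eq_bot, LinearMap.ker_eq_bot']
      intro X hX
      exact key X hX
    have hsurj : Function.Surjective f :=
      (LinearMap.injective_iff_surjective).mp hinj
    obtain ⟨X, hXeq⟩ := hsurj A
    exact ⟨X, hXeq, fun Z hZ => hinj (hZ.trans hXeq.symm)⟩
  · -- trace symmetry
    intro A B X Y hX hY
    rw [← hX, ← hY, Matrix.mul_add, Matrix.add_mul, Matrix.trace_add, Matrix.trace_add]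
    have h1 : (X * (R * Y * S)).trace = ((S * X * R) * Y).trace := by
      rw [show X * (R * Y * S) = (X * (R * Y)) * S by noncomm_ring, Matrix.trace_mul_comm]
      congr 1; noncomm_ring
    have h2 : (X * (S * Y * R)).trace = ((R * X * S) * Y).trace := by
      rw [show X * (S * Y * R) = (X * (S * Y)) * R by noncomm_ring, Matrix.trace_mul_comm]
      congr 1; noncomm_ring
    rw [h1, h2, add_comm]
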